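/- Let X ⊂ ℝ² be a strongly convex body (smooth boundary with strictly positive curvature). Then through any fixed tangency point z ∈ ∂X there passes at most one 3-periodic outer billiard trajectory; i.e., there do not exist two distinct triangles x₁x₂x₃ and x₁'x₂'x₃' circumscribed about X whose sides touch ∂X exactly at their midpoints and which share the tangency point z on the line through x₁x₂ and x₁'x₂'. -/

import Mathlib

open scoped RealInnerProductSpace

/-- `z` is the tangency point of the side `[p, q]` of a circumscribed polygon:
`z` is the midpoint of `p` and `q`, and the line through `p` and `q` touches the
body `X` exactly at `z`. -/
def SideTangentAtMidpoint (X : Set (EuclideanSpace ℝ (Fin 2)))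
    (p q : EuclideanSpace ℝ (Fin 2)) : Prop :=
  midpoint ℝ p q ∈ frontier X ∧
    (affineSpan ℝ {p, q} : Set (EuclideanSpace ℝ (Fin 2))) ∩ X = {midpoint ℝ p q}

/-- A 3-periodic outer billiard trajectory: a triangle circumscribed about `X` whose
sides are tangent to `∂X` exactly at their midpoints. -/
def IsOuterTraj3 (X : Set (EuclideanSpace ℝ (Fin 2)))
    (x : Fin 3 → EuclideanSpace ℝ (Fin 2)) : Prop :=
  Function.Injective x ∧ ∀ i : Fin 3, SideTangentAtMidpoint X (x i) (x (i + 1))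

noncomputable def rot (v : EuclideanSpace ℝ (Fin 2)) : EuclideanSpace ℝ (Fin 2) :=
  WithLp.toLp 2 ![-(v 1), v 0]

lemma inner_rot (v : EuclideanSpace ℝ (Fin 2)) : ⟪rot v, v⟫ = 0 := by
  simp [rot, PiLp.inner_apply, Fin.sum_univ_two]; ring

lemma norm_sq_two (v : EuclideanSpace ℝ (Fin 2)) (hv : ‖v‖ = 1) : v 0 ^ 2 + v 1 ^ 2 = 1 := by
  have h := real_inner_self_eq_norm_sq v
  rw [hv] at h
  have : v 0 * v 0 + v 1 * v 1 = 1 := by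
    rw [PiLp.inner_apply, Fin.sum_univ_two] at h
    simp only [RCLike.inner_apply, conj_trivial] at h
    linarith
  nlinarith [this]

lemma expand (v : EuclideanSpace ℝ (Fin 2)) (hv : ‖v‖ = 1) (w : EuclideanSpace ℝ (Fin 2)) :
    w = ⟪w, rot v⟫ • rot v + ⟪w, v⟫ • v := by
  have hv2 := norm_sq_two v hv
  ext i
  fin_cases i
  · simp [rot, PiLp.inner_apply, Fin.sum_univ_two, PiLp.add_apply, PiLp.smul_apply]
    linear_combination (-(w 0)) * hv2
  · simp [rot, PiLp.inner_apply, Fin.sum_univ_two, PiLp.add_apply, PiLp.smul_apply]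
    linear_combination (-(w 1)) * hv2

lemma inner_rot_self (v : EuclideanSpace ℝ (Fin 2)) (hv : ‖v‖ = 1) :
    ⟪rot v, rot v⟫ = 1 := by
  have h := real_inner_self_eq_norm_sq v
  rw [hv] at h
  have h2 : v 0 * v 0 + v 1 * v 1 = 1 := by
    rw [PiLp.inner_apply, Fin.sum_univ_two] at h
    simp only [RCLike.inner_apply, conj_trivial] at h
    linarith
  rw [PiLp.inner_apply, Fin.sum_univ_two]
  simp [rot]
  nlinarith [h2]

lemma map_expand {v : EuclideanSpace ℝ (Fin 2)} (hv1 : ‖v‖ = 1)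
    (f : EuclideanSpace ℝ (Fin 2) →L[ℝ] ℝ) (w : EuclideanSpace ℝ (Fin 2)) :
    f w = ⟪w, rot v⟫ * f (rot v) + ⟪w, v⟫ * f v := by
  conv_lhs => rw [expand v hv1 w]
  rw [map_add, map_smul, map_smul]
  simp [smul_eq_mul]

lemma inner_split (z w₁ w₂ e : EuclideanSpace ℝ (Fin 2)) :
    ⟪w₁ - w₂, e⟫ = ⟪w₁ - z, e⟫ - ⟪w₂ - z, e⟫ := by
  have h : w₁ - w₂ = (w₁ - z) - (w₂ - z) := by abel
  rw [h, inner_sub_left]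

lemma midpoint_formula (x y : EuclideanSpace ℝ (Fin 2)) :
    midpoint ℝ x y = (2⁻¹ : ℝ) • (x + y) := by
  rw [midpoint, AffineMap.lineMap_apply, vsub_eq_sub, vadd_eq_add, invOf_eq_inv]
  module

lemma support_of_side {X : Set (EuclideanSpace ℝ (Fin 2))}
    (hXconv : Convex ℝ X) (hXint : (interior X).Nonempty)
    {p q : EuclideanSpace ℝ (Fin 2)} (h : SideTangentAtMidpoint X p q) :
    ∃ f : EuclideanSpace ℝ (Fin 2) →L[ℝ] ℝ, f ≠ 0 ∧ f p = f (midpoint ℝ p q) ∧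
      f q = f (midpoint ℝ p q) ∧ ∀ y ∈ X, f y ≤ f (midpoint ℝ p q) := by
  classical
  set m := midpoint ℝ p q with hm
  obtain ⟨hmfr, hcap⟩ := h
  have hmX : m ∈ X := by
    have : m ∈ (affineSpan ℝ {p, q} : Set (EuclideanSpace ℝ (Fin 2))) ∩ X := by
      rw [hcap]; rfl
    exact this.2
  have hpq : p ∈ affineSpan ℝ {p, q} := subset_affineSpan ℝ _ (by simp)
  have hqq : q ∈ affineSpan ℝ {p, q} := subset_affineSpan ℝ _ (by simp)
  have hdisj : Disjoint (interior X) (affineSpan ℝ {p, q} : Set (EuclideanSpace ℝ (Fin 2))) := by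
    rw [Set.disjoint_left]
    intro y hy1 hy2
    have : y ∈ (affineSpan ℝ {p, q} : Set (EuclideanSpace ℝ (Fin 2))) ∩ X :=
      ⟨hy2, interior_subset hy1⟩
    rw [hcap] at this
    have hym : y = m := this
    rw [hym] at hy1
    exact hmfr.2 hy1
  obtain ⟨f, u, h1, h2⟩ := geometric_hahn_banach_open hXconv.interior isOpen_interior
    (AffineSubspace.convex _) hdisj
  have hfconst : f q = f p := by
    by_contra hne
    set c : ℝ := (u - f p - 1) / (f q - f p) with hc
    have hmem : c • (q -ᵥ p) +ᵥ p ∈ affineSpan ℝ {p, q} :=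
      AffineSubspace.smul_vsub_vadd_mem _ c hqq hpq hpq
    have hle := h2 _ hmem
    have hval : f (c • (q -ᵥ p) +ᵥ p) = f p + c * (f q - f p) := by
      simp only [vsub_eq_sub, vadd_eq_add, map_add, map_smul, map_sub, smul_eq_mul]
      ring
    have hcc : c * (f q - f p) = u - f p - 1 :=
      div_mul_cancel₀ _ (sub_ne_zero.mpr hne)
    rw [hval, hcc] at hle
    linarith
  have hmspan : m ∈ affineSpan ℝ {p, q} := by
    have hmval : m = (⅟2 : ℝ) • (q -ᵥ p) +ᵥ p := by
      rw [hm, midpoint, AffineMap.lineMap_apply]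
    rw [hmval]
    exact AffineSubspace.smul_vsub_vadd_mem _ _ hqq hpq hpq
  -- every point of X has f value ≤ u
  obtain ⟨a₀, ha₀⟩ := hXint
  have key : ∀ y ∈ closure X, f y ≤ u := by
    intro y hy
    by_contra hlt
    push_neg at hlt
    have hfa : f a₀ < u := h1 _ ha₀
    set θ : ℝ := (f y - u) / (f y - f a₀) with hθ
    have hd : 0 < f y - f a₀ := by linarith
    have hθ0 : 0 < θ := div_pos (by linarith) hd
    have hθ1 : θ < 1 := (div_lt_one hd).2 (by linarith)
    have hmem : (1 - θ) • y + θ • a₀ ∈ interior X :=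
      hXconv.combo_closure_interior_mem_interior hy ha₀ (by linarith) hθ0 (by ring)
    have := h1 _ hmem
    have hval : f ((1 - θ) • y + θ • a₀) = (1 - θ) * f y + θ * f a₀ := by
      simp [map_add, map_smul]
    rw [hval] at this
    have hcc : θ * (f y - f a₀) = f y - u :=
      div_mul_cancel₀ _ (ne_of_gt hd)
    nlinarith
  have hmu : f m = u := le_antisymm (key m (subset_closure hmX)) (h2 _ hmspan)
  refine ⟨f, ?_, ?_, ?_, ?_⟩
  · intro hf0
    have := h1 _ ha₀
    rw [hf0] at this
    simp at this
    have := h2 _ hmspan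
    rw [hf0] at this
    simp at this
    linarith
  · have := h2 _ hpq
    have h2' := h2 _ hqq
    -- f p = f m : m is midpoint, f constant on span? use hfconst and linearity of midpoint
    have : f m = (f p + f q) / 2 := by
      have hmval : m = (⅟2 : ℝ) • (q -ᵥ p) +ᵥ p := by
        rw [hm, midpoint, AffineMap.lineMap_apply]
      rw [hmval]
      simp only [vsub_eq_sub, vadd_eq_add, map_add, map_smul, map_sub, smul_eq_mul]
      rw [invOf_eq_inv]
      ring
    rw [this, hfconst]; ring
  · have : f m = (f p + f q) / 2 := by
      have hmval : m = (⅟2 : ℝ) • (q -ᵥ p) +ᵥ p := by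
        rw [hm, midpoint, AffineMap.lineMap_apply]
      rw [hmval]
      simp only [vsub_eq_sub, vadd_eq_add, map_add, map_smul, map_sub, smul_eq_mul]
      rw [invOf_eq_inv]
      ring
    rw [this, hfconst]; ring
  · intro y hy
    rw [hmu]
    exact key y (subset_closure hy)

lemma base_line {X : Set (EuclideanSpace ℝ (Fin 2))}
    (hXconv : Convex ℝ X) (hXint : (interior X).Nonempty)
    {z v : EuclideanSpace ℝ (Fin 2)} (hv1 : ‖v‖ = 1)
    (huniq : ∀ w : EuclideanSpace ℝ (Fin 2), ‖w‖ = 1 → (∀ y ∈ X, ⟪y - z, w⟫ ≤ 0) → w = v)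
    {A B : EuclideanSpace ℝ (Fin 2)} (hAB : SideTangentAtMidpoint X A B)
    (hABne : A ≠ B) (hzmid : z = midpoint ℝ A B) :
    ⟪B - z, v⟫ = 0 ∧ (∀ y ∈ X, ⟪y - z, v⟫ = 0 → y = z) := by
  obtain ⟨f, hf0, hfA, hfB, hfX⟩ := support_of_side hXconv hXint hAB
  rw [← hzmid] at hfA hfB hfX
  set d := (InnerProductSpace.toDual ℝ (EuclideanSpace ℝ (Fin 2))).symm f with hd
  have hd0 : d ≠ 0 := by
    intro hdz
    apply hf0
    have := congrArg (InnerProductSpace.toDual ℝ (EuclideanSpace ℝ (Fin 2))) hdz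
    simpa [hd] using this
  have hdinner : ∀ w, ⟪d, w⟫ = f w := fun w => InnerProductSpace.toDual_symm_apply
  set v₀ : EuclideanSpace ℝ (Fin 2) := ‖d‖⁻¹ • d with hv₀
  have hnv₀ : ‖v₀‖ = 1 := by
    rw [hv₀, norm_smul]
    simp [norm_ne_zero_iff.2 hd0, inv_mul_cancel₀]
  have hinner : ∀ w, ⟪w, v₀⟫ = ‖d‖⁻¹ * f w := by
    intro w
    rw [hv₀, real_inner_smul_right, real_inner_comm, hdinner]
  have hsupp : ∀ y ∈ X, ⟪y - z, v₀⟫ ≤ 0 := by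
    intro y hy
    rw [hinner, map_sub]
    have := hfX y hy
    have hpos : (0:ℝ) < ‖d‖⁻¹ := inv_pos.2 (norm_pos_iff.2 hd0)
    nlinarith
  have hveq : v₀ = v := huniq v₀ hnv₀ hsupp
  have hBz : ⟪B - z, v⟫ = 0 := by
    rw [← hveq, hinner, map_sub, hfB]
    ring
  refine ⟨hBz, ?_⟩
  -- second part
  have hBne : B ≠ z := by
    intro hBzeq
    apply hABne
    rw [hzmid] at hBzeq
    have : A + B = B + B := by
      calc A + B = midpoint ℝ A B + midpoint ℝ A B := (midpoint_add_self ℝ A B).symm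
        _ = B + B := by rw [← hBzeq]
    have := add_right_cancel this
    exact this
  set t : ℝ := ⟪B - z, rot v⟫ with ht
  have hBexp : B - z = t • rot v := by
    have := expand v hv1 (B - z)
    rwa [hBz, zero_smul, add_zero] at this
  have htne : t ≠ 0 := by
    intro ht0
    apply hBne
    rw [ht0, zero_smul, sub_eq_zero] at hBexp
    exact hBexp
  intro y hy hyv
  have hyexp : y - z = ⟪y - z, rot v⟫ • rot v := by
    have := expand v hv1 (y - z)
    rwa [hyv, zero_smul, add_zero] at this
  have hzspan : z ∈ affineSpan ℝ {A, B} := by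
    have hpq : A ∈ affineSpan ℝ {A, B} := subset_affineSpan ℝ _ (by simp)
    have hqq : B ∈ affineSpan ℝ {A, B} := subset_affineSpan ℝ _ (by simp)
    have hmval : z = (⅟2 : ℝ) • (B -ᵥ A) +ᵥ A := by
      rw [hzmid, midpoint, AffineMap.lineMap_apply]
    rw [hmval]
    exact AffineSubspace.smul_vsub_vadd_mem _ _ hqq hpq hpq
  have hBspan : B ∈ affineSpan ℝ {A, B} := subset_affineSpan ℝ _ (by simp)
  have hyspan : y ∈ affineSpan ℝ {A, B} := by
    have hval : y = (⟪y - z, rot v⟫ / t) • (B -ᵥ z) +ᵥ z := by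
      rw [vsub_eq_sub, hBexp, vadd_eq_add, smul_smul, div_mul_cancel₀ _ htne]
      rw [← hyexp]
      abel
    rw [hval]
    exact AffineSubspace.smul_vsub_vadd_mem _ _ hBspan hzspan hzspan
  have : y ∈ (affineSpan ℝ {A, B} : Set (EuclideanSpace ℝ (Fin 2))) ∩ X := ⟨hyspan, hy⟩
  rw [hAB.2, ← hzmid] at this
  exact this

set_option maxHeartbeats 2000000 in
lemma traj_side {X : Set (EuclideanSpace ℝ (Fin 2))}
    (hXconv : Convex ℝ X) (hXcl : IsClosed X) (hXint : (interior X).Nonempty)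
    {z v : EuclideanSpace ℝ (Fin 2)} (hv1 : ‖v‖ = 1)
    (hvX : ∀ y ∈ X, ⟪y - z, v⟫ ≤ 0)
    (huniq : ∀ w : EuclideanSpace ℝ (Fin 2), ‖w‖ = 1 → (∀ y ∈ X, ⟪y - z, w⟫ ≤ 0) → w = v)
    {A B C : EuclideanSpace ℝ (Fin 2)}
    (hAB : SideTangentAtMidpoint X A B) (hBC : SideTangentAtMidpoint X B C)
    (hCA : SideTangentAtMidpoint X C A) (hABne : A ≠ B) (hCAne : C ≠ A)
    (hzmid : z = midpoint ℝ A B) (ht : 0 < ⟪B - z, rot v⟫) :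
    0 < -⟪midpoint ℝ B C - z, v⟫ ∧
    ⟪midpoint ℝ C A - z, v⟫ = ⟪midpoint ℝ B C - z, v⟫ ∧
    ⟪midpoint ℝ B C - z, rot v⟫ - ⟪midpoint ℝ C A - z, rot v⟫ = ⟪B - z, rot v⟫ ∧
    B = z + ⟪B - z, rot v⟫ • rot v ∧
    (∀ y ∈ X, (-⟪midpoint ℝ B C - z, v⟫) * (⟪y - z, rot v⟫ - ⟪midpoint ℝ B C - z, rot v⟫)
        - ⟪midpoint ℝ C A - z, rot v⟫ * ((-⟪y - z, v⟫) - (-⟪midpoint ℝ B C - z, v⟫)) ≤ 0) ∧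
    (∀ y ∈ X, 0 ≤ (-⟪midpoint ℝ B C - z, v⟫) * (⟪y - z, rot v⟫ - ⟪midpoint ℝ C A - z, rot v⟫)
        - ⟪midpoint ℝ B C - z, rot v⟫ * ((-⟪y - z, v⟫) - (-⟪midpoint ℝ B C - z, v⟫))) := by
  set u := rot v with hu
  set P := midpoint ℝ B C with hP
  set Q := midpoint ℝ C A with hQ
  set t := ⟪B - z, u⟫ with htdef
  obtain ⟨hBv, hXline⟩ := base_line hXconv hXint hv1 huniq hAB hABne hzmid
  have hBval : B = z + t • u := by
    have h1 := expand v hv1 (B - z)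
    rw [hBv, zero_smul, add_zero, ← hu, ← htdef] at h1
    rw [← h1]; abel
  have hAval : A = z + z - B := by
    have h1 := midpoint_add_self ℝ A B
    rw [← hzmid] at h1
    rw [eq_sub_iff_add_eq]; exact h1.symm
  have hPQ : P - Q = t • u := by
    rw [hP, hQ, midpoint_formula, midpoint_formula, hAval, hBval]
    module
  have haPQ : ⟪P - z, u⟫ - ⟪Q - z, u⟫ = t := by
    rw [← inner_split z P Q u, hPQ, real_inner_smul_left, inner_rot_self v hv1, mul_one]
  have hPQv : ⟪Q - z, v⟫ = ⟪P - z, v⟫ := by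
    have h1 : ⟪P - Q, v⟫ = 0 := by
      rw [hPQ, real_inner_smul_left, hu, inner_rot, mul_zero]
    rw [inner_split z P Q v] at h1
    linarith
  have hzX : z ∈ X := hXcl.frontier_subset (hzmid ▸ hAB.1)
  have hPX : P ∈ X := hXcl.frontier_subset hBC.1
  have hQX : Q ∈ X := hXcl.frontier_subset hCA.1
  have hPz : P ≠ z := by
    intro hPzeq
    apply hCAne
    have h1 := midpoint_add_self ℝ B C
    have h2 := midpoint_add_self ℝ A B
    rw [← hzmid] at h2
    rw [← hP, hPzeq] at h1
    -- z + z = B + C and z + z = A + B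
    have : B + C = A + B := by rw [← h1, h2]
    have : C + B = A + B := by rw [← this]; abel
    exact add_right_cancel this
  set h := -⟪P - z, v⟫ with hh
  have hhpos : 0 < h := by
    rcases lt_or_eq_of_le (hvX P hPX) with h1 | h1
    · rw [hh]; linarith
    · exact absurd (hXline P hPX h1) hPz
  set aP := ⟪P - z, u⟫ with haP
  set aQ := ⟪Q - z, u⟫ with haQ
  refine ⟨hhpos, hPQv, haPQ, hBval, ?_, ?_⟩
  -- (*R): support along side B C at P
  · obtain ⟨f, hf0, hfB, hfC, hfX⟩ := support_of_side hXconv hXint hBC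
    rw [← hP] at hfB hfC hfX
    set fu := f u with hfu
    set fv := f v with hfv
    have hcoord : ∀ w : EuclideanSpace ℝ (Fin 2),
        f w = ⟪w, u⟫ * fu + ⟪w, v⟫ * fv := fun w => map_expand hv1 f w
    have e1 : (-aQ) * fu + h * fv = 0 := by
      have h1 : f (B - P) = 0 := by rw [map_sub, hfB, sub_self]
      rw [hcoord, inner_split z B P u, inner_split z B P v, hBv] at h1
      rw [← htdef, ← haP] at h1
      have ht2 : t - aP = -aQ := by linarith [haPQ]
      rw [ht2] at h1
      rw [← h1, hh]
      ring
    have ez : (-aP) * fu + h * fv ≤ 0 := by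
      have h1 : f (z - P) ≤ 0 := by
        rw [map_sub, sub_nonpos]
        exact hfX z hzX
      rw [hcoord, inner_split z z P u, inner_split z z P v] at h1
      simp only [sub_self, inner_zero_left] at h1
      rw [← haP] at h1
      calc (-aP) * fu + h * fv = (0 - ⟪P - z, u⟫) * fu + (0 - ⟪P - z, v⟫) * fv := by
            rw [hh, haP]; ring
        _ ≤ 0 := h1
    have hfupos : 0 < fu := by
      have hge : 0 ≤ fu := by nlinarith [e1, ez, ht]
      rcases lt_or_eq_of_le hge with h1 | h1
      · exact h1
      · exfalso
        have hfv0 : fv = 0 := by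
          have h2 : h * fv = aQ * fu := by linarith [e1]
          rw [← h1, mul_zero] at h2
          exact (mul_eq_zero.1 h2).resolve_left (ne_of_gt hhpos)
        apply hf0
        ext w
        rw [ContinuousLinearMap.zero_apply, hcoord, ← h1, hfv0]
        ring
    intro y hy
    have hyineq : (⟪y - z, u⟫ - aP) * fu + (⟪y - z, v⟫ + h) * fv ≤ 0 := by
      have h1 : f (y - P) ≤ 0 := by
        rw [map_sub, sub_nonpos]; exact hfX y hy
      rw [hcoord, inner_split z y P u, inner_split z y P v] at h1
      rw [← haP] at h1
      calc (⟪y - z, u⟫ - aP) * fu + (⟪y - z, v⟫ + h) * fv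
          = (⟪y - z, u⟫ - aP) * fu + (⟪y - z, v⟫ - ⟪P - z, v⟫) * fv := by rw [hh]; ring
        _ ≤ 0 := h1
    have hhfv : h * fv = aQ * fu := by linarith [e1]
    have e3 : fu * (h * (⟪y - z, u⟫ - aP) + aQ * (⟪y - z, v⟫ + h))
        = h * ((⟪y - z, u⟫ - aP) * fu + (⟪y - z, v⟫ + h) * fv) := by
      linear_combination (-(⟪y - z, v⟫ + h)) * hhfv
    have key : fu * (h * (⟪y - z, u⟫ - aP) + aQ * (⟪y - z, v⟫ + h)) ≤ 0 := by
      rw [e3]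
      exact mul_nonpos_of_nonneg_of_nonpos hhpos.le hyineq
    have hG : h * (⟪y - z, u⟫ - aP) + aQ * (⟪y - z, v⟫ + h) ≤ 0 := by
      by_contra hGc
      push_neg at hGc
      nlinarith [mul_pos hfupos hGc]
    calc h * (⟪y - z, u⟫ - aP) - aQ * ((-⟪y - z, v⟫) - h)
        = h * (⟪y - z, u⟫ - aP) + aQ * (⟪y - z, v⟫ + h) := by ring
      _ ≤ 0 := hG
  -- (*L): support along side C A at Q
  · obtain ⟨g, hg0, hgC, hgA, hgX⟩ := support_of_side hXconv hXint hCA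
    rw [← hQ] at hgC hgA hgX
    set gu := g u with hgu
    set gv := g v with hgv
    have hcoord : ∀ w : EuclideanSpace ℝ (Fin 2),
        g w = ⟪w, u⟫ * gu + ⟪w, v⟫ * gv := fun w => map_expand hv1 g w
    have hAv : ⟪A - z, v⟫ = 0 := by
      have : A - z = -(B - z) := by rw [hAval]; abel
      rw [this, inner_neg_left, hBv, neg_zero]
    have hAu : ⟪A - z, u⟫ = -t := by
      have : A - z = -(B - z) := by rw [hAval]; abel
      rw [this, inner_neg_left, ← htdef]
    have hQv : ⟪Q - z, v⟫ = -h := by rw [hPQv, hh]; ring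
    have e1 : (-aP) * gu + h * gv = 0 := by
      have h1 : g (A - Q) = 0 := by rw [map_sub, hgA, sub_self]
      rw [hcoord, inner_split z A Q u, inner_split z A Q v, hAv, hAu, hQv, ← haQ] at h1
      have ht2 : -t - aQ = -aP := by linarith [haPQ]
      rw [ht2] at h1
      rw [← h1]
      ring
    have ez : (-aQ) * gu + h * gv ≤ 0 := by
      have h1 : g (z - Q) ≤ 0 := by
        rw [map_sub, sub_nonpos]
        exact hgX z hzX
      rw [hcoord, inner_split z z Q u, inner_split z z Q v] at h1
      simp only [sub_self, inner_zero_left] at h1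
      rw [← haQ, hQv] at h1
      calc (-aQ) * gu + h * gv = (0 - aQ) * gu + (0 - (-h)) * gv := by ring
        _ ≤ 0 := h1
    have hguneg : gu < 0 := by
      have hle : gu ≤ 0 := by nlinarith [e1, ez, ht]
      rcases lt_or_eq_of_le hle with h1 | h1
      · exact h1
      · exfalso
        have hgv0 : gv = 0 := by
          have h2 : h * gv = aP * gu := by linarith [e1]
          rw [h1, mul_zero] at h2
          exact (mul_eq_zero.1 h2).resolve_left (ne_of_gt hhpos)
        apply hg0
        ext w
        rw [ContinuousLinearMap.zero_apply, hcoord, h1, hgv0]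
        ring
    intro y hy
    have hyineq : (⟪y - z, u⟫ - aQ) * gu + (⟪y - z, v⟫ + h) * gv ≤ 0 := by
      have h1 : g (y - Q) ≤ 0 := by
        rw [map_sub, sub_nonpos]; exact hgX y hy
      rw [hcoord, inner_split z y Q u, inner_split z y Q v, ← haQ, hQv] at h1
      calc (⟪y - z, u⟫ - aQ) * gu + (⟪y - z, v⟫ + h) * gv
          = (⟪y - z, u⟫ - aQ) * gu + (⟪y - z, v⟫ - (-h)) * gv := by ring
        _ ≤ 0 := h1
    have hhgv : h * gv = aP * gu := by linarith [e1]
    have e3 : gu * (h * (⟪y - z, u⟫ - aQ) + aP * (⟪y - z, v⟫ + h))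
        = h * ((⟪y - z, u⟫ - aQ) * gu + (⟪y - z, v⟫ + h) * gv) := by
      linear_combination (-(⟪y - z, v⟫ + h)) * hhgv
    have key : gu * (h * (⟪y - z, u⟫ - aQ) + aP * (⟪y - z, v⟫ + h)) ≤ 0 := by
      rw [e3]
      exact mul_nonpos_of_nonneg_of_nonpos hhpos.le hyineq
    have hG : 0 ≤ h * (⟪y - z, u⟫ - aQ) + aP * (⟪y - z, v⟫ + h) := by
      by_contra hGc
      push_neg at hGc
      nlinarith [mul_pos_of_neg_of_neg hguneg hGc]
    calc (0:ℝ) ≤ h * (⟪y - z, u⟫ - aQ) + aP * (⟪y - z, v⟫ + h) := hG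
      _ = h * (⟪y - z, u⟫ - aQ) - aP * ((-⟪y - z, v⟫) - h) := by ring

lemma side_symm {X : Set (EuclideanSpace ℝ (Fin 2))} {p q : EuclideanSpace ℝ (Fin 2)}
    (h : SideTangentAtMidpoint X p q) : SideTangentAtMidpoint X q p := by
  obtain ⟨h1, h2⟩ := h
  constructor
  · rwa [midpoint_comm]
  · rw [Set.pair_comm q p, midpoint_comm]
    exact h2

lemma range_fin3 (x : Fin 3 → EuclideanSpace ℝ (Fin 2)) :
    Set.range x = {x 0, x 1, x 2} := by
  ext y
  constructor
  · rintro ⟨i, rfl⟩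
    fin_cases i <;> simp
  · rintro (rfl | rfl | rfl)
    exacts [⟨0, rfl⟩, ⟨1, rfl⟩, ⟨2, rfl⟩]

lemma traj_norm {X : Set (EuclideanSpace ℝ (Fin 2))}
    (hXconv : Convex ℝ X) (hXcl : IsClosed X) (hXint : (interior X).Nonempty)
    {z v : EuclideanSpace ℝ (Fin 2)} (hv1 : ‖v‖ = 1)
    (hvX : ∀ y ∈ X, ⟪y - z, v⟫ ≤ 0)
    (huniq : ∀ w : EuclideanSpace ℝ (Fin 2), ‖w‖ = 1 → (∀ y ∈ X, ⟪y - z, w⟫ ≤ 0) → w = v)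
    (x : Fin 3 → EuclideanSpace ℝ (Fin 2)) (hx : IsOuterTraj3 X x)
    (hzmid : z = midpoint ℝ (x 0) (x 1)) :
    ∃ B C : EuclideanSpace ℝ (Fin 2),
      Set.range x = {z + z - B, B, C} ∧
      C = midpoint ℝ B C + midpoint ℝ B C - B ∧
      midpoint ℝ B C ∈ X ∧ midpoint ℝ C (z + z - B) ∈ X ∧
      0 < ⟪B - z, rot v⟫ ∧
      0 < -⟪midpoint ℝ B C - z, v⟫ ∧
      ⟪midpoint ℝ C (z + z - B) - z, v⟫ = ⟪midpoint ℝ B C - z, v⟫ ∧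
      ⟪midpoint ℝ B C - z, rot v⟫ - ⟪midpoint ℝ C (z + z - B) - z, rot v⟫ = ⟪B - z, rot v⟫ ∧
      B = z + ⟪B - z, rot v⟫ • rot v ∧
      (∀ y ∈ X, (-⟪midpoint ℝ B C - z, v⟫) * (⟪y - z, rot v⟫ - ⟪midpoint ℝ B C - z, rot v⟫)
          - ⟪midpoint ℝ C (z + z - B) - z, rot v⟫ *
            ((-⟪y - z, v⟫) - (-⟪midpoint ℝ B C - z, v⟫)) ≤ 0) ∧
      (∀ y ∈ X, 0 ≤ (-⟪midpoint ℝ B C - z, v⟫) *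
            (⟪y - z, rot v⟫ - ⟪midpoint ℝ C (z + z - B) - z, rot v⟫)
          - ⟪midpoint ℝ B C - z, rot v⟫ * ((-⟪y - z, v⟫) - (-⟪midpoint ℝ B C - z, v⟫))) := by
  obtain ⟨hinj, hside⟩ := hx
  have h01 : x 0 ≠ x 1 := fun h => absurd (hinj h) (by decide)
  have h12 : x 1 ≠ x 2 := fun h => absurd (hinj h) (by decide)
  have h20 : x 2 ≠ x 0 := fun h => absurd (hinj h) (by decide)
  have hs0 : SideTangentAtMidpoint X (x 0) (x 1) := hside 0
  have hs1 : SideTangentAtMidpoint X (x 1) (x 2) := hside 1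
  have hs2 : SideTangentAtMidpoint X (x 2) (x 0) := hside 2
  have hsum : x 0 + x 1 = z + z := by
    rw [hzmid]; exact (midpoint_add_self ℝ (x 0) (x 1)).symm
  obtain ⟨hBv, -⟩ := base_line hXconv hXint hv1 huniq hs0 h01 hzmid
  have ht1ne : ⟪x 1 - z, rot v⟫ ≠ 0 := by
    intro ht0
    have h1 := expand v hv1 (x 1 - z)
    rw [hBv, ht0, zero_smul, zero_smul, add_zero] at h1
    have hx1z : x 1 = z := by
      have := sub_eq_zero.1 h1
      exact this
    apply h01
    have hx0z : x 0 = z := by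
      have h2 := hsum
      rw [hx1z] at h2
      exact add_right_cancel h2
    rw [hx0z, hx1z]
  rcases lt_or_gt_of_ne ht1ne with hneg | hpos
  · -- reversed orientation: B := x 0
    have hx0u : ⟪x 0 - z, rot v⟫ = -⟪x 1 - z, rot v⟫ := by
      have hd : x 0 - z = -(x 1 - z) := by
        have : x 0 = z + z - x 1 := by rw [eq_sub_iff_add_eq]; exact hsum
        rw [this]; abel
      rw [hd, inner_neg_left]
    have ht0 : 0 < ⟪x 0 - z, rot v⟫ := by rw [hx0u]; linarith
    have hzmid' : z = midpoint ℝ (x 1) (x 0) := by rw [midpoint_comm]; exact hzmid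
    obtain ⟨f1, f2, f3, f4, f5, f6⟩ := traj_side hXconv hXcl hXint hv1 hvX huniq
      (side_symm hs0) (side_symm hs2) (side_symm hs1) h01.symm h12.symm hzmid' ht0
    have hA1 : x 1 = z + z - x 0 := by
      rw [eq_sub_iff_add_eq, add_comm]; exact hsum
    rw [hA1] at f2 f3 f5 f6
    refine ⟨x 0, x 2, ?_, ?_, ?_, ?_, ht0, f1, f2, f3, f4, f5, f6⟩
    · rw [range_fin3, hA1]
      exact Set.insert_comm _ _ _
    · rw [eq_sub_iff_add_eq, add_comm]
      exact (midpoint_add_self ℝ (x 0) (x 2)).symm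
    · exact hXcl.frontier_subset ((side_symm hs2).1)
    · rw [← hA1]
      exact hXcl.frontier_subset ((side_symm hs1).1)
  · -- standard orientation: B := x 1
    obtain ⟨f1, f2, f3, f4, f5, f6⟩ := traj_side hXconv hXcl hXint hv1 hvX huniq
      hs0 hs1 hs2 h01 h20 hzmid hpos
    have hA0 : x 0 = z + z - x 1 := by rw [eq_sub_iff_add_eq]; exact hsum
    rw [hA0] at f2 f3 f5 f6
    refine ⟨x 1, x 2, ?_, ?_, ?_, ?_, hpos, f1, f2, f3, f4, f5, f6⟩
    · rw [range_fin3, hA0]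
    · rw [eq_sub_iff_add_eq, add_comm]
      exact (midpoint_add_self ℝ (x 1) (x 2)).symm
    · exact hXcl.frontier_subset hs1.1
    · rw [← hA0]
      exact hXcl.frontier_subset hs2.1

lemma quad_unique {t s h h' : ℝ} (ht : 0 < t) (hs : 0 < s) (hh : 0 < h) (hh' : 0 < h')
    (A1 : h*s + t*h' ≤ 2*(t*h)) (A2 : h'*t + s*h ≤ 2*(s*h')) : t = s ∧ h = h' := by
  have pos1 : 0 ≤ h*s + t*h' := by positivity
  have sq2 : (h*s + t*h')^2 ≤ (2*(s*h'))^2 := pow_le_pow_left₀ pos1 (by linarith) 2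
  have sq1 : 4*((t*h)*(s*h')) ≤ (h*s + t*h')^2 := by nlinarith [sq_nonneg (h*s - t*h')]
  have e1 : t*h ≤ s*h' := by nlinarith [sq1, sq2, mul_pos hs hh']
  have sq3 : (h*s + t*h')^2 ≤ (2*(t*h))^2 := pow_le_pow_left₀ pos1 (by linarith) 2
  have sq4 : 4*((s*h')*(t*h)) ≤ (h*s + t*h')^2 := by nlinarith [sq_nonneg (h*s - t*h')]
  have e2 : s*h' ≤ t*h := by nlinarith [sq4, sq3, mul_pos ht hh]
  have e3 : t*h = s*h' := le_antisymm e1 e2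
  have e3' : (h*s)*(t*h') = (t*h)*(t*h) := by linear_combination (-(t*h)) * e3
  have e4 : (h*s - t*h')^2 ≤ 0 := by nlinarith [sq3, e3']
  have e5 : h*s = t*h' := by nlinarith [e4, sq_nonneg (h*s - t*h')]
  have e6 : h*s ≤ t*h := by linarith
  have e7 : (h*s)*(h*s) = (t*h)*(t*h) := by
    calc (h*s)*(h*s) = (h*s)*(t*h') := by rw [e5]
      _ = (t*h)*(t*h) := e3'
  have e8 : h*s = t*h := by nlinarith [e6, e7, mul_pos hh hs, mul_pos ht hh]
  have hth' : t*h' = t*h := by linarith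
  have hheq : h = h' := mul_left_cancel₀ (ne_of_gt ht) hth'.symm
  have hhs : h*s = h*t := by linarith [e8]
  have hts : t = s := (mul_left_cancel₀ (ne_of_gt hh) hhs).symm
  exact ⟨hts, hheq⟩

set_option maxHeartbeats 1000000 in
/-- Through any tangency point `z ∈ ∂X` of a strongly convex planar body (convex compact
body with smooth boundary, encoded by strict convexity and uniqueness of the outer unit
normal at every boundary point) there passes at most one 3-periodic outer billiard
trajectory. -/
theorem outer_billiard_three_periodic_unique
    (X : Set (EuclideanSpace ℝ (Fin 2)))
    (hXconv : Convex ℝ X) (hXcomp : IsCompact X) (hXint : (interior X).Nonempty)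
    (hXstrict : ∀ p ∈ frontier X, ∀ q ∈ frontier X, p ≠ q →
      openSegment ℝ p q ⊆ interior X)
    (hXsmooth : ∀ z ∈ frontier X, ∃! v : EuclideanSpace ℝ (Fin 2),
      ‖v‖ = 1 ∧ ∀ y ∈ X, ⟪y - z, v⟫ ≤ 0)
    (x x' : Fin 3 → EuclideanSpace ℝ (Fin 2))
    (hx : IsOuterTraj3 X x) (hx' : IsOuterTraj3 X x')
    (hz : midpoint ℝ (x 0) (x 1) = midpoint ℝ (x' 0) (x' 1)) :
    Set.range x = Set.range x' := by
  have hXcl : IsClosed X := hXcomp.isClosed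
  set z := midpoint ℝ (x 0) (x 1) with hzdef
  have hzfr : z ∈ frontier X := (hx.2 0).1
  obtain ⟨v, ⟨hv1, hvX⟩, hvu⟩ := hXsmooth z hzfr
  have huniq : ∀ w : EuclideanSpace ℝ (Fin 2), ‖w‖ = 1 →
      (∀ y ∈ X, ⟪y - z, w⟫ ≤ 0) → w = v := fun w a b => hvu w ⟨a, b⟩
  obtain ⟨B, C, hr, hC, hPX, hQX, htpos, hhpos, hQv, haPQ, hBval, hineq5, hineq6⟩ :=
    traj_norm hXconv hXcl hXint hv1 hvX huniq x hx hzdef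
  obtain ⟨B', C', hr', hC', hPX', hQX', htpos', hhpos', hQv', haPQ', hBval', hineq5', hineq6'⟩ :=
    traj_norm hXconv hXcl hXint hv1 hvX huniq x' hx' hz
  set u := rot v with hu
  set P := midpoint ℝ B C with hPdef
  set Q := midpoint ℝ C (z + z - B) with hQdef
  set P' := midpoint ℝ B' C' with hPdef'
  set Q' := midpoint ℝ C' (z + z - B') with hQdef'
  set aP := ⟪P - z, u⟫ with haPdef
  set aQ := ⟪Q - z, u⟫ with haQdef
  set aP' := ⟪P' - z, u⟫ with haPdef'
  set aQ' := ⟪Q' - z, u⟫ with haQdef'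
  set h : ℝ := -⟪P - z, v⟫ with hhdef
  set h' : ℝ := -⟪P' - z, v⟫ with hhdef'
  -- the four cross inequalities
  have I1 := hineq5 P' hPX'
  have I2 := hineq6 Q' hQX'
  have I3 := hineq5' P hPX
  have I4 := hineq6' Q hQX
  rw [hQv'] at I2
  rw [hQv] at I4
  rw [← haPdef', ← hhdef'] at I1
  rw [← haQdef', ← hhdef'] at I2
  rw [← haPdef, ← hhdef] at I3
  rw [← haQdef, ← hhdef] at I4
  -- positive parameters
  have htA : 0 < aP - aQ := by rw [haPQ]; exact htpos
  have htA' : 0 < aP' - aQ' := by rw [haPQ']; exact htpos'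
  have A1 : h*(aP' - aQ') + (aP - aQ)*h' ≤ 2*((aP - aQ)*h) := by nlinarith [I1, I2]
  have A2 : h'*(aP - aQ) + (aP' - aQ')*h ≤ 2*((aP' - aQ')*h') := by nlinarith [I3, I4]
  obtain ⟨hts, hheq⟩ := quad_unique htA htA' hhpos hhpos' A1 A2
  -- equality of the tangency points
  have I1' := I1
  rw [← hheq] at I1'
  have I3' := I3
  rw [hheq] at I3'
  have haPle : aP' ≤ aP := by nlinarith [I1', hhpos]
  have haPge : aP ≤ aP' := by nlinarith [I3', hhpos']
  have haPeq : aP = aP' := le_antisymm haPge haPle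
  have hPeq : P = P' := by
    have h1 : P - P' = ⟪P - P', u⟫ • u + ⟪P - P', v⟫ • v := by
      rw [hu]; exact expand v hv1 (P - P')
    rw [inner_split z P P' u, inner_split z P P' v] at h1
    rw [← haPdef, ← haPdef', haPeq, sub_self] at h1
    have h2 : ⟪P - z, v⟫ - ⟪P' - z, v⟫ = 0 := by
      have : -⟪P - z, v⟫ = -⟪P' - z, v⟫ := by rw [← hhdef, ← hhdef', hheq]
      linarith
    rw [h2] at h1
    simp at h1
    exact sub_eq_zero.1 h1
  have hBeq : B = B' := by
    rw [hBval, hBval']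
    have : ⟪B - z, u⟫ = ⟪B' - z, u⟫ := by
      rw [← haPQ, ← haPQ']
      exact hts
    rw [hu] at this ⊢
    rw [this]
  have hCeq : C = C' := by
    rw [hC, hC', hPeq, hBeq]
  rw [hr, hr', hBeq, hCeq]
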